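/- Let P = {1,…,n} and fix a repository on P in which the digraph (P, K) of known dependencies is acyclic, C = ∅, there are at most u unknown dependencies (|U| ≤ u), and at most d packages are defective. Let F be a family of subsets of P satisfying the (≤d, ≤u+1)-covering property, and let the query family be T = {c(v) : v ∈ F}, where c(v) is the K-closure of v. Then the set M = {p ∈ P : S(p) ≠ ∅} is a successful installation and every successful installation is a subset of M; hence the feedback of the |F| queries of T determines the unique maximum-size successful installation. -/

import Mathlib

/-- A software repository on package set `Fin n`: known dependencies `K`,
unknown dependencies `U`, conflicts `C` (unordered pairs of distinct packages),
and broken packages `B`. -/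
structure Repo (n : ℕ) where
  K : Finset (Fin n × Fin n)
  U : Finset (Fin n × Fin n)
  C : Finset (Sym2 (Fin n))
  B : Finset (Fin n)
  hC : ∀ s ∈ C, ¬ s.IsDiag

/-- An installation `I` is successful if it avoids broken packages, is closed
under all (known and unknown) dependencies, and contains no conflicting pair. -/
def Successful {n : ℕ} (R : Repo n) (I : Finset (Fin n)) : Prop :=
  Disjoint I R.B ∧
  (∀ e ∈ R.K ∪ R.U, e.1 ∈ I → e.2 ∈ I) ∧
  (∀ s ∈ R.C, ¬ ∀ x ∈ s, x ∈ I)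

/-- A package is defective if no successful installation contains it. -/
def Defective {n : ℕ} (R : Repo n) (p : Fin n) : Prop :=
  ∀ I : Finset (Fin n), Successful R I → p ∉ I

/-- The set of defective packages. -/
def DefSet {n : ℕ} (R : Repo n) : Set (Fin n) := {p | Defective R p}

/-- Two packages weakly conflict if no successful installation contains both. -/
def WeakConflict {n : ℕ} (R : Repo n) (p q : Fin n) : Prop :=
  ∀ I : Finset (Fin n), Successful R I → ¬ (p ∈ I ∧ q ∈ I)

/-- `p` weakly depends on `q` if every successful installation containing `p`
also contains `q`. -/
def WeakDep {n : ℕ} (R : Repo n) (p q : Fin n) : Prop :=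
  ∀ I : Finset (Fin n), Successful R I → p ∈ I → q ∈ I

/-- The weakly-conflicting pairs of non-defective packages (each unordered pair
counted once via `<`). -/
def WeakConflictPairs {n : ℕ} (R : Repo n) : Set (Fin n × Fin n) :=
  {pq | pq.1 < pq.2 ∧ ¬ Defective R pq.1 ∧ ¬ Defective R pq.2 ∧
    WeakConflict R pq.1 pq.2}

/-- `(n,a,b)`-cover-free family. -/
def IsCFF (n a b : ℕ) (T : Finset (Finset (Fin n))) : Prop :=
  ∀ S₁ S₂ : Finset (Fin n), Disjoint S₁ S₂ → S₁.card = a → S₂.card = b →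
    ∃ v ∈ T, Disjoint v S₁ ∧ S₂ ⊆ v

/-- The `(≤a, ≤b)`-covering property. -/
def CoveringLE (n a b : ℕ) (F : Finset (Finset (Fin n))) : Prop :=
  ∀ S₁ S₂ : Finset (Fin n), Disjoint S₁ S₂ → S₁.card ≤ a →
    1 ≤ S₂.card → S₂.card ≤ b → ∃ v ∈ F, Disjoint v S₁ ∧ S₂ ⊆ v

/-- The digraph of known dependencies is acyclic. -/
def Acyclic {n : ℕ} (K : Finset (Fin n × Fin n)) : Prop :=
  ∀ p : Fin n, ¬ Relation.TransGen (fun x y => (x, y) ∈ K) p p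

open Classical in
/-- The `K`-closure of `v`: everything reachable from `v` along `K`-edges. -/
noncomputable def kclosure {n : ℕ} (K : Finset (Fin n × Fin n))
    (v : Finset (Fin n)) : Finset (Fin n) :=
  Finset.univ.filter
    (fun p => ∃ q ∈ v, Relation.ReflTransGen (fun x y => (x, y) ∈ K) q p)

/-- `Sset R T p`: the queries of `T` that are successful installations
containing `p`. -/
def Sset {n : ℕ} (R : Repo n) (T : Finset (Finset (Fin n))) (p : Fin n) :
    Set (Finset (Fin n)) :=
  {t | t ∈ T ∧ Successful R t ∧ p ∈ t}


lemma mem_of_rtg {n : ℕ} (R : Repo n) {I : Finset (Fin n)} (hI : Successful R I)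
    {q p : Fin n} (h : Relation.ReflTransGen (fun x y => (x, y) ∈ R.K) q p)
    (hq : q ∈ I) : p ∈ I := by
  induction h with
  | refl => exact hq
  | tail _ hxy ih => exact hI.2.1 _ (Finset.mem_union_left _ hxy) ih

lemma not_defective_iff {n : ℕ} (R : Repo n) (p : Fin n) :
    ¬ Defective R p ↔ ∃ I : Finset (Fin n), Successful R I ∧ p ∈ I := by
  unfold Defective; push_neg; rfl

/-- With acyclic known dependencies, no conflicts, at most `u` unknown
dependencies and at most `d` defects, the `K`-closures of a
`(≤d, ≤u+1)`-covering family determine the maximal sub-repository: the set `M`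
of packages with a successful query is a successful installation containing
every successful installation, hence the unique maximum-size one. -/
theorem maximal_subrepo_upper_bound (n u d : ℕ) (R : Repo n)
    (hacyc : Acyclic R.K) (hC : R.C = ∅) (hU : R.U.card ≤ u)
    (hd : (DefSet R).ncard ≤ d)
    (F : Finset (Finset (Fin n))) (hF : CoveringLE n d (u + 1) F)
    (M : Finset (Fin n))
    (hM : ∀ p : Fin n, p ∈ M ↔ Sset R (F.image (kclosure R.K)) p ≠ ∅) :
    Successful R M ∧ (∀ I : Finset (Fin n), Successful R I → I ⊆ M) ∧
      (∀ I : Finset (Fin n), Successful R I → I.card = M.card → I = M) := by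
  classical
  -- M is successful
  have hMsucc : Successful R M := by
    refine ⟨?_, ?_, ?_⟩
    · rw [Finset.disjoint_left]
      intro p hp hpB
      obtain ⟨t, ht⟩ := Set.nonempty_iff_ne_empty.2 ((hM p).1 hp)
      exact absurd ht.2.2 (Finset.disjoint_left.1 ht.2.1.1 · hpB)
    · intro e he h1
      obtain ⟨t, ht⟩ := Set.nonempty_iff_ne_empty.2 ((hM e.1).1 h1)
      have h2 : e.2 ∈ t := ht.2.1.2.1 e he ht.2.2
      exact (hM e.2).2 (Set.nonempty_iff_ne_empty.1 ⟨t, ht.1, ht.2.1, h2⟩)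
    · intro s hs; rw [hC] at hs; exact absurd hs (Finset.notMem_empty s)
  -- every successful installation is contained in M
  have hsub : ∀ I : Finset (Fin n), Successful R I → I ⊆ M := by
    intro I hI p hp
    have hpnd : ¬ Defective R p := fun h => h I hI hp
    set S₁ : Finset (Fin n) := (DefSet R).toFinset with hS₁
    set S₂ : Finset (Fin n) :=
      insert p ((R.U.image Prod.snd).filter (fun b => ¬ Defective R b)) with hS₂
    have hS₂nd : ∀ b ∈ S₂, ¬ Defective R b := by
      intro b hb
      rcases Finset.mem_insert.1 hb with rfl | hb
      · exact hpnd
      · exact (Finset.mem_filter.1 hb).2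
    have hdisj : Disjoint S₁ S₂ := by
      rw [Finset.disjoint_right]
      intro b hb hbS1
      exact hS₂nd b hb ((Set.mem_toFinset (s := DefSet R)).1 (by convert hbS1))
    have hcard1 : S₁.card ≤ d := by
      rwa [hS₁, ← Set.ncard_eq_toFinset_card']
    have hcard2 : S₂.card ≤ u + 1 := by
      calc S₂.card ≤ ((R.U.image Prod.snd).filter (fun b => ¬ Defective R b)).card + 1 :=
            Finset.card_insert_le _ _
        _ ≤ (R.U.image Prod.snd).card + 1 :=
            Nat.add_le_add_right (Finset.card_filter_le _ _) 1
        _ ≤ R.U.card + 1 := Nat.add_le_add_right (Finset.card_image_le) 1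
        _ ≤ u + 1 := Nat.add_le_add_right hU 1
    have hcard2' : 1 ≤ S₂.card :=
      Finset.card_pos.2 ⟨p, Finset.mem_insert_self _ _⟩
    obtain ⟨v, hvF, hvd, hvS₂⟩ := hF S₁ S₂ hdisj hcard1 hcard2' hcard2
    set t : Finset (Fin n) := kclosure R.K v with hT
    have hvt : v ⊆ t := by
      intro x hx
      simp only [hT, kclosure, Finset.mem_filter, Finset.mem_univ, true_and]
      exact ⟨x, hx, Relation.ReflTransGen.refl⟩
    -- every element of t is non-defective
    have htnd : ∀ x ∈ t, ¬ Defective R x := by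
      intro x hx
      simp only [hT, kclosure, Finset.mem_filter, Finset.mem_univ, true_and] at hx
      obtain ⟨q, hq, hrtg⟩ := hx
      have hqnd : ¬ Defective R q := by
        intro hdq
        exact (Finset.disjoint_left.1 hvd hq) (by convert (Set.mem_toFinset (s := DefSet R)).2 hdq)
      obtain ⟨J, hJ, hqJ⟩ := (not_defective_iff R q).1 hqnd
      exact fun h => h J hJ (mem_of_rtg R hJ hrtg hqJ)
    have htsucc : Successful R t := by
      refine ⟨?_, ?_, ?_⟩
      · rw [Finset.disjoint_left]
        intro x hx hxB
        exact htnd x hx (fun J hJ hxJ => (Finset.disjoint_left.1 hJ.1 hxJ) hxB)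
      · intro e he h1
        rcases Finset.mem_union.1 he with heK | heU
        · simp only [hT, kclosure, Finset.mem_filter, Finset.mem_univ, true_and] at h1 ⊢
          obtain ⟨q, hq, hrtg⟩ := h1
          exact ⟨q, hq, hrtg.tail heK⟩
        · -- e.2 is a non-defective U-head, hence in S₂ ⊆ v ⊆ t
          have h1nd : ¬ Defective R e.1 := htnd e.1 h1
          obtain ⟨J, hJ, h1J⟩ := (not_defective_iff R e.1).1 h1nd
          have h2J : e.2 ∈ J := hJ.2.1 e (Finset.mem_union_right _ heU) h1J
          have h2nd : ¬ Defective R e.2 := fun h => h J hJ h2J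
          have : e.2 ∈ S₂ := by
            refine Finset.mem_insert_of_mem (Finset.mem_filter.2 ⟨?_, h2nd⟩)
            exact Finset.mem_image.2 ⟨e, heU, rfl⟩
          exact hvt (hvS₂ this)
      · intro s hs; rw [hC] at hs; exact absurd hs (Finset.notMem_empty s)
    have hpt : p ∈ t := hvt (hvS₂ (Finset.mem_insert_self _ _))
    have htmem : t ∈ F.image (kclosure R.K) := Finset.mem_image.2 ⟨v, hvF, rfl⟩
    exact (hM p).2 (Set.nonempty_iff_ne_empty.1 ⟨t, htmem, htsucc, hpt⟩)
  refine ⟨hMsucc, hsub, fun I hI hcard => ?_⟩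
  exact Finset.eq_of_subset_of_card_le (hsub I hI) (le_of_eq hcard.symm)
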